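/- arXiv:0705.0432 — 2 statements merged into one kernel-verified Lean document; each statement's English description precedes it below -/
import Mathlib

section
/- Let ω belong to the Bari–Stechkin class and suppose Σ_{k=1}^∞ [ω(1/k)]² < ∞. If a is a continuous N×N matrix function on 𝕋 all of whose entries belong to 𝓗^ω, then Σ_{k∈ℤ} ‖a_k‖² |k| < ∞, where a_k is the k-th Fourier coefficient of a and ‖·‖ is any fixed matrix norm on ℂ^{N×N} (equivalently, Σ_{k∈ℤ} Σ_{α,β=1}^N |(a_k)_{αβ}|² |k| < ∞). In other words, 𝓗^ω_{N×N} is contained in the Krein algebra (K_{2,2}^{1/2,1/2})_{N×N}. -/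
set_option maxHeartbeats 1000000
set_option linter.deprecated false


open scoped Real
open Filter MeasureTheory

noncomputable section

/-- Modulus of continuity of `f : ℝ → ℂ` (viewed as a `2π`-periodic function on the circle). -/
def mc (f : ℝ → ℂ) (x : ℝ) : ℝ :=
  sSup {r : ℝ | ∃ h y : ℝ, |h| ≤ x ∧ r = ‖f (y + h) - f y‖}

/-- The Bari–Stechkin class. -/
def BariStechkin (w : ℝ → ℝ) : Prop :=
  (∃ A : ℝ, 0 < A ∧ ∀ x y : ℝ, 0 < x → x ≤ y → y ≤ π → w x ≤ A * w y) ∧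
  (∀ x : ℝ, 0 < x → x ≤ π → 0 < w x) ∧
  Tendsto w (nhdsWithin 0 (Set.Ioi 0)) (nhds 0) ∧
  (∀ x : ℝ, 0 < x → x ≤ π → IntervalIntegrable (fun y => w y / y) volume 0 x) ∧
  (∃ B : ℝ, ∀ x : ℝ, 0 < x → x ≤ π → (∫ y in (0:ℝ)..x, w y / y) ≤ B * w x) ∧
  (∀ x : ℝ, 0 < x → x ≤ π → IntervalIntegrable (fun y => w y / y ^ 2) volume x π) ∧
  (∃ B : ℝ, ∀ x : ℝ, 0 < x → x ≤ π → x * (∫ y in x..π, w y / y ^ 2) ≤ B * w x)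

/-- Membership in the generalized Hölder space `𝓗^ω`. -/
def MemH (w : ℝ → ℝ) (f : ℝ → ℂ) : Prop :=
  Continuous f ∧ Function.Periodic f (2 * π) ∧
    ∃ C : ℝ, ∀ x : ℝ, 0 < x → x ≤ π → mc f x ≤ C * w x

/-- Membership in `𝓗₀^ω`. -/
def MemH0 (w : ℝ → ℝ) (f : ℝ → ℂ) : Prop :=
  MemH w f ∧ Tendsto (fun x => mc f x / w x) (nhdsWithin 0 (Set.Ioi 0)) (nhds 0)

/-- The `k`-th Fourier coefficient of a function on the circle. -/
def fc (f : ℝ → ℂ) (k : ℤ) : ℂ :=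
  (1 / (2 * (π : ℂ))) * ∫ θ in (0:ℝ)..(2 * π), f θ * Complex.exp (-(Complex.I * (k : ℂ) * (θ : ℂ)))

/-- Fourier coefficients of a matrix function, computed entrywise. -/
def Fc {N : ℕ} (a : ℝ → Matrix (Fin N) (Fin N) ℂ) (k : ℤ) : Matrix (Fin N) (Fin N) ℂ :=
  Matrix.of fun α β => fc (fun θ => a θ α β) k

/-- `ã(t) := a(1/t)`, i.e. `θ ↦ a (−θ)`. -/
def tilde {N : ℕ} (a : ℝ → Matrix (Fin N) (Fin N) ℂ) : ℝ → Matrix (Fin N) (Fin N) ℂ :=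
  fun θ => a (-θ)

/-- The Hilbert space `ℓ²(ℕ, ℂ^N)`. -/
abbrev HS (N : ℕ) : Type := lp (fun _ : ℕ => EuclideanSpace ℂ (Fin N)) 2

/-- The standard basis vectors of `ℓ²(ℕ, ℂ^N)`. -/
def ebasis (N : ℕ) (j : ℕ) (α : Fin N) : HS N :=
  lp.single 2 j (EuclideanSpace.single α 1)

/-- `T` is the block Toeplitz operator with symbol `a`. -/
def IsToeplitz {N : ℕ} (a : ℝ → Matrix (Fin N) (Fin N) ℂ) (T : HS N →L[ℂ] HS N) : Prop :=
  ∀ (j k : ℕ) (α β : Fin N),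
    (inner ℂ (ebasis N j α) (T (ebasis N k β)) : ℂ) = Fc a ((j : ℤ) - (k : ℤ)) α β

/-- `Ha` is the block Hankel operator with symbol `a`. -/
def IsHankel {N : ℕ} (a : ℝ → Matrix (Fin N) (Fin N) ℂ) (Ha : HS N →L[ℂ] HS N) : Prop :=
  ∀ (j k : ℕ) (α β : Fin N),
    (inner ℂ (ebasis N j α) (Ha (ebasis N k β)) : ℂ) = Fc a ((j : ℤ) + (k : ℤ) + 1) α β

/-- Invertibility of the Toeplitz operator `T(a)` on `ℓ²(ℕ, ℂ^N)`. -/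
def ToeplitzInvertible {N : ℕ} (a : ℝ → Matrix (Fin N) (Fin N) ℂ) : Prop :=
  ∃ T : HS N ≃L[ℂ] HS N, IsToeplitz a (T : HS N →L[ℂ] HS N)

/-- The finite block Toeplitz matrix `T_n(a)`. -/
def Tmat {N : ℕ} (a : ℝ → Matrix (Fin N) (Fin N) ℂ) (n : ℕ) :
    Matrix (Fin (n + 1) × Fin N) (Fin (n + 1) × Fin N) ℂ :=
  Matrix.of fun p q => Fc a ((p.1 : ℤ) - (q.1 : ℤ)) p.2 q.2

/-- Matrix functions with entries in `𝓗^ω` and Fourier coefficients vanishing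
at positive indices. -/
def MemHMinus (w : ℝ → ℝ) {N : ℕ} (u : ℝ → Matrix (Fin N) (Fin N) ℂ) : Prop :=
  (∀ α β, MemH w (fun θ => u θ α β)) ∧ ∀ k : ℤ, 0 < k → Fc u k = 0

/-- Matrix functions with entries in `𝓗^ω` and Fourier coefficients vanishing
at negative indices. -/
def MemHPlus (w : ℝ → ℝ) {N : ℕ} (u : ℝ → Matrix (Fin N) (Fin N) ℂ) : Prop :=
  (∀ α β, MemH w (fun θ => u θ α β)) ∧ ∀ k : ℤ, k < 0 → Fc u k = 0

/-- Bounded measurable (`2π`-periodic) matrix functions: `L^∞_{N×N}`. -/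
def MemLinf {N : ℕ} (v : ℝ → Matrix (Fin N) (Fin N) ℂ) : Prop :=
  (∀ α β, Measurable (fun θ => v θ α β)) ∧
  (∀ α β, Function.Periodic (fun θ => v θ α β) (2 * π)) ∧
  ∃ M : ℝ, ∀ θ α β, ‖v θ α β‖ ≤ M

/-- `\overline{H^∞}_{N×N}`. -/
def MemHinfMinus {N : ℕ} (v : ℝ → Matrix (Fin N) (Fin N) ℂ) : Prop :=
  MemLinf v ∧ ∀ k : ℤ, 0 < k → Fc v k = 0

/-- `H^∞_{N×N}`. -/
def MemHinfPlus {N : ℕ} (v : ℝ → Matrix (Fin N) (Fin N) ℂ) : Prop :=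
  MemLinf v ∧ ∀ k : ℤ, k < 0 → Fc v k = 0

/-- The projection `P_n` on `ℓ²(ℕ, ℂ^N)`. -/
def Pn (N n : ℕ) : HS N →L[ℂ] HS N :=
  ∑ j ∈ Finset.range (n + 1), ∑ α : Fin N,
    (innerSL ℂ (ebasis N j α)).smulRight (ebasis N j α)

/-- The complementary projection `Q_n`. -/
def Qn (N n : ℕ) : HS N →L[ℂ] HS N := ContinuousLinearMap.id ℂ (HS N) - Pn N n

/-- `Δ_0 := P_0`, `Δ_j := P_j − P_{j−1}`. -/
def Dl (N j : ℕ) : HS N →L[ℂ] HS N := if j = 0 then Pn N 0 else Pn N j - Pn N (j - 1)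

/-- The operator `F_{n,k}(b,c)`, built from given Toeplitz/Hankel operators. -/
def Fop {N : ℕ} (Tb Tc Hb Hct : HS N →L[ℂ] HS N) (n k : ℕ) : HS N →L[ℂ] HS N :=
  (Pn N n) ∘L Tc ∘L (Qn N n) ∘L (((Qn N n) ∘L Hb ∘L Hct ∘L (Qn N n)) ^ k) ∘L
    (Qn N n) ∘L Tb ∘L (Pn N n)

/-- Trace of an operator supported on the range of `P_n`. -/
def trOp {N : ℕ} (A : HS N →L[ℂ] HS N) (n : ℕ) : ℂ :=
  ∑ j ∈ Finset.range (n + 1), ∑ α : Fin N, (inner ℂ (ebasis N j α) (A (ebasis N j α)) : ℂ)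

/-- The `N×N` matrix `G_{ℓ,k}(b,c)`. -/
def Gmat {N : ℕ} (Tb Tc Hb Hct : HS N →L[ℂ] HS N) (l k : ℕ) : Matrix (Fin N) (Fin N) ℂ :=
  Matrix.of fun α β =>
    (inner ℂ (ebasis N 0 α)
      (((Pn N 0) ∘L Tc ∘L (Qn N l) ∘L (((Qn N l) ∘L Hb ∘L Hct ∘L (Qn N l)) ^ k) ∘L
        (Qn N l) ∘L Tb ∘L (Pn N 0)) (ebasis N 0 β)) : ℂ)

/-- Sup-norm of a scalar function. -/
def supNorm (f : ℝ → ℂ) : ℝ := sSup {r : ℝ | ∃ θ : ℝ, r = ‖f θ‖}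

/-- The Hölder seminorm `|f|_ω`. -/
def hSemi (w : ℝ → ℝ) (f : ℝ → ℂ) : ℝ :=
  sSup {r : ℝ | ∃ x : ℝ, 0 < x ∧ x ≤ π ∧ r = mc f x / w x}

/-- `L^∞` norm of a matrix function: `N · max_{α,β} esssup |a_{αβ}|`. -/
def linfNorm {N : ℕ} (v : ℝ → Matrix (Fin N) (Fin N) ℂ) : ℝ :=
  N * sSup {r : ℝ | ∃ α β : Fin N, r = essSup (fun θ => ‖v θ α β‖) volume}

/-- `max_{α,β} ω(u_{αβ}, x)`. -/
def mcMax {N : ℕ} (u : ℝ → Matrix (Fin N) (Fin N) ℂ) (x : ℝ) : ℝ :=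
  sSup {r : ℝ | ∃ α β : Fin N, r = mc (fun θ => u θ α β) x}

/-- The norm `max_{α,β} (‖·‖_∞ + |·|_ω)` on matrix Hölder functions. -/
def hNormMat (w : ℝ → ℝ) {N : ℕ} (u : ℝ → Matrix (Fin N) (Fin N) ℂ) : ℝ :=
  sSup {r : ℝ | ∃ α β : Fin N,
    r = supNorm (fun θ => u θ α β) + hSemi w (fun θ => u θ α β)}

/-- Approximation numbers of a bounded operator on `ℓ²(ℕ, ℂ^N)`. -/
def sNum {N : ℕ} (A : HS N →L[ℂ] HS N) (n : ℕ) : ℝ :=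
  sInf {r : ℝ | ∃ F : HS N →L[ℂ] HS N,
    Module.rank ℂ (LinearMap.range (F.toLinearMap)) ≤ (n : Cardinal) ∧ r = ‖A - F‖}

/-- If `Σ [ω(1/k)]² < ∞`, then `𝓗^ω_{N×N}` is contained in the Krein
algebra: `Σ_{k∈ℤ} ‖a_k‖² |k| < ∞`. -/
lemma aux_abs_exp_sq (t : ℝ) :
    ‖Complex.exp ((t : ℂ) * Complex.I) - 1‖ ^ 2 = 2 - 2 * Real.cos t := by
  rw [Complex.exp_mul_I, ← Complex.ofReal_cos, ← Complex.ofReal_sin, Complex.sq_norm]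
  simp [Complex.normSq_apply, Complex.cos_ofReal_re, Complex.sin_ofReal_re]
  nlinarith [Real.sin_sq_add_cos_sq t]

lemma aux_bdd {f : ℝ → ℂ} (hc : Continuous f) (hp : Function.Periodic f (2 * π)) :
    ∃ M : ℝ, 0 ≤ M ∧ ∀ θ, ‖f θ‖ ≤ M := by
  obtain ⟨M, hM⟩ :=
    (isCompact_Icc (a := (0:ℝ)) (b := 2 * π)).exists_bound_of_continuousOn hc.continuousOn
  have h2 : (0:ℝ) < 2 * π := by positivity
  refine ⟨max M 0, le_max_right _ _, fun θ => ?_⟩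
  have he : f θ = f (θ - ⌊θ / (2 * π)⌋ * (2 * π)) := (hp.sub_int_mul_eq _).symm
  rw [he]
  refine le_trans ?_ (le_max_left _ _)
  have h1 : 0 ≤ θ - ⌊θ / (2 * π)⌋ * (2 * π) := Int.sub_floor_div_mul_nonneg θ h2
  have h2' : θ - ⌊θ / (2 * π)⌋ * (2 * π) < 2 * π := Int.sub_floor_div_mul_lt θ h2
  simpa using hM _ ⟨h1, h2'.le⟩

lemma aux_le_mc {f : ℝ → ℂ} {M : ℝ} (hM : ∀ θ, ‖f θ‖ ≤ M)
    {x h y : ℝ} (hh : |h| ≤ x) :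
    ‖f (y + h) - f y‖ ≤ mc f x := by
  apply le_csSup
  · refine ⟨2 * M, ?_⟩
    rintro r ⟨h', y', -, rfl⟩
    calc ‖f (y' + h') - f y'‖ ≤ ‖f (y' + h')‖ + ‖f y'‖ := by
          simpa using norm_sub_le (f (y' + h')) (f y')
      _ ≤ 2 * M := by have := hM (y' + h'); have := hM y'; linarith
  · exact ⟨h, y, hh, rfl⟩

lemma aux_mc_nonneg {f : ℝ → ℂ} {M : ℝ} (hM : ∀ θ, ‖f θ‖ ≤ M)
    {x : ℝ} (hx : 0 ≤ x) : 0 ≤ mc f x := by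
  have h0 := aux_le_mc (f := f) hM (x := x) (h := 0) (y := 0) (by simpa using hx)
  simpa using h0

lemma aux_fc_sub {F G : ℝ → ℂ} (hF : Continuous F) (hG : Continuous G) (k : ℤ) :
    fc (fun θ => F θ - G θ) k = fc F k - fc G k := by
  unfold fc
  have hi : Continuous fun θ : ℝ => Complex.exp (-(Complex.I * (k : ℂ) * (θ : ℂ))) := by
    fun_prop
  rw [← mul_sub, ← intervalIntegral.integral_sub ((show Continuous fun θ : ℝ => F θ * Complex.exp (-(Complex.I * (k : ℂ) * (θ : ℂ))) from hF.mul hi).intervalIntegrable _ _)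
    ((show Continuous fun θ : ℝ => G θ * Complex.exp (-(Complex.I * (k : ℂ) * (θ : ℂ))) from hG.mul hi).intervalIntegrable _ _)]
  congr 1
  apply intervalIntegral.integral_congr
  intro θ _
  ring

lemma aux_fc_shift {f : ℝ → ℂ} (hc : Continuous f) (hp : Function.Periodic f (2 * π))
    (h : ℝ) (k : ℤ) :
    fc (fun θ => f (θ + h)) k = Complex.exp ((((k : ℝ) * h : ℝ) : ℂ) * Complex.I) * fc f k := by
  unfold fc
  set φ : ℝ → ℂ := fun θ => f θ * Complex.exp (-(Complex.I * (k : ℂ) * (θ : ℂ))) with hφ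
  have hφc : Continuous φ := by fun_prop
  have hφp : Function.Periodic φ (2 * π) := by
    intro θ
    simp only [φ]
    rw [hp θ]
    congr 1
    rw [show -(Complex.I * (k : ℂ) * ((θ + 2 * π : ℝ) : ℂ))
        = -(Complex.I * (k : ℂ) * (θ : ℂ)) + (-k : ℤ) * (2 * (π : ℂ) * Complex.I) by
      push_cast; ring]
    rw [Complex.exp_add, Complex.exp_int_mul_two_pi_mul_I, mul_one]
  have key : ∀ θ : ℝ, f (θ + h) * Complex.exp (-(Complex.I * (k : ℂ) * (θ : ℂ)))
      = Complex.exp ((((k : ℝ) * h : ℝ) : ℂ) * Complex.I) * φ (θ + h) := by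
    intro θ
    simp only [φ]
    rw [mul_left_comm]
    congr 1
    rw [← Complex.exp_add]
    congr 1
    push_cast
    ring
  simp_rw [key]
  rw [intervalIntegral.integral_const_mul]
  rw [intervalIntegral.integral_comp_add_right φ h]
  rw [zero_add, show 2 * π + h = h + 2 * π by ring, hφp.intervalIntegral_add_eq h 0, zero_add]
  ring

lemma aux_bessel {f : ℝ → ℂ} (hc : Continuous f) (hp : Function.Periodic f (2 * π))
    {M : ℝ} (hM : ∀ θ, ‖f θ‖ ≤ M) (s : Finset ℤ) :
    ∑ k ∈ s, ‖fc f k‖ ^ 2 ≤ M ^ 2 := by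
  have hπ : (0:ℝ) < 2 * π := by positivity
  haveI h2 : Fact (0 < 2 * π) := ⟨hπ⟩
  set G : AddCircle (2 * π) → ℂ := hp.lift with hG
  have hGc : Continuous G := by
    unfold G
    unfold Function.Periodic.lift
    exact hc.quotient_liftOn' _
  have hGM : ∀ z, ‖G z‖ ≤ M := by
    intro z
    induction z using QuotientAddGroup.induction_on with
    | H θ => simpa [G] using hM θ
  have hmem : MemLp G 2 (AddCircle.haarAddCircle) :=
    MemLp.of_bound hGc.aestronglyMeasurable M (Eventually.of_forall hGM)
  set F := hmem.toLp G with hF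
  have hae : ⇑F =ᵐ[AddCircle.haarAddCircle] G := hmem.coeFn_toLp
  have hcoeff : ∀ k : ℤ, fourierCoeff (⇑F) k = fc f k := by
    intro k
    have h1 : fourierCoeff (⇑F) k = fourierCoeff G k := by
      simp only [fourierCoeff]
      exact integral_congr_ae ((hae.mono fun x hx => by simp only [hx]))
    rw [h1, fourierCoeff_eq_intervalIntegral G k 0, zero_add]
    have h3 : ∀ θ : ℝ, (fourier (-k) (θ : AddCircle (2 * π))) • G (θ : AddCircle (2 * π))
        = f θ * Complex.exp (-(Complex.I * (k : ℂ) * (θ : ℂ))) := by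
      intro θ
      rw [fourier_coe_apply (T := 2 * π)]
      have hGθ : G (θ : AddCircle (2 * π)) = f θ := hp.lift_coe θ
      rw [hGθ, smul_eq_mul, mul_comm]
      have hπ0 : (π : ℂ) ≠ 0 := by exact_mod_cast Real.pi_ne_zero
      congr 2
      push_cast
      field_simp
    simp_rw [h3]
    rw [Complex.real_smul]
    unfold fc
    congr 1
    push_cast
    norm_num
  have hsummable : Summable fun k : ℤ => ‖fourierCoeff (⇑F) k‖ ^ 2 := by
    have h4 := (lp.hasSum_norm (E := fun _ : ℤ => ℂ) (p := 2) (by norm_num)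
      (fourierBasis.repr F)).summable
    refine h4.congr fun i => ?_
    rw [fourierBasis_repr]
    norm_num
  have hfin : ∑ k ∈ s, ‖fourierCoeff (⇑F) k‖ ^ 2 ≤ ∑' k : ℤ, ‖fourierCoeff (⇑F) k‖ ^ 2 :=
    Summable.sum_le_tsum s (fun _ _ => by positivity) hsummable
  have htsum := tsum_sq_fourierCoeff F
  have hM0 : 0 ≤ M := le_trans (norm_nonneg _) (hM 0)
  have hint : (∫ t : AddCircle (2 * π), ‖F t‖ ^ 2 ∂AddCircle.haarAddCircle) ≤ M ^ 2 := by
    have hGint : Integrable (fun t : AddCircle (2 * π) => ‖G t‖ ^ 2) AddCircle.haarAddCircle := by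
      refine memLp_one_iff_integrable.mp ?_
      refine MemLp.of_bound ((hGc.norm.pow 2)).aestronglyMeasurable (M ^ 2)
        (Eventually.of_forall fun t => ?_)
      have := hGM t
      have h0 := norm_nonneg (G t)
      simp only [norm_pow, norm_norm]
      nlinarith
    calc (∫ t : AddCircle (2 * π), ‖F t‖ ^ 2 ∂AddCircle.haarAddCircle)
        = ∫ t : AddCircle (2 * π), ‖G t‖ ^ 2 ∂AddCircle.haarAddCircle :=
          integral_congr_ae (hae.mono fun x hx => by simp only [hx])
      _ ≤ ∫ _t : AddCircle (2 * π), M ^ 2 ∂AddCircle.haarAddCircle := by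
          refine integral_mono hGint (integrable_const _) fun t => ?_
          have := hGM t
          have h0 := norm_nonneg (G t)
          nlinarith
      _ = M ^ 2 := by simp
  calc ∑ k ∈ s, ‖fc f k‖ ^ 2 = ∑ k ∈ s, ‖fourierCoeff (⇑F) k‖ ^ 2 := by
        refine Finset.sum_congr rfl fun k _ => ?_
        rw [hcoeff k]
    _ ≤ ∑' k : ℤ, ‖fourierCoeff (⇑F) k‖ ^ 2 := hfin
    _ = _ := htsum
    _ ≤ M ^ 2 := hint

lemma aux_block_scalar {f : ℝ → ℂ} (hc : Continuous f) (hp : Function.Periodic f (2 * π))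
    {M h : ℝ} (hh : 0 < h)
    (hM : ∀ θ, ‖f (θ + h) - f θ‖ ≤ M) (s : Finset ℤ)
    (hs : ∀ k ∈ s, 1/2 ≤ |(k : ℝ)| * h ∧ |(k : ℝ)| * h ≤ 1) :
    (2 - 2 * Real.cos (1/2)) * ∑ k ∈ s, ‖fc f k‖ ^ 2 ≤ M ^ 2 := by
  have hc' : Continuous fun θ => f (θ + h) := hc.comp (continuous_id.add continuous_const)
  set g : ℝ → ℂ := fun θ => f (θ + h) - f θ with hg
  have hgc : Continuous g := hc'.sub hc
  have hgp : Function.Periodic g (2 * π) := by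
    intro θ
    simp only [g]
    rw [show θ + 2 * π + h = (θ + h) + 2 * π by ring, hp (θ + h), hp θ]
  have hb := aux_bessel hgc hgp (M := M) hM s
  have hfc : ∀ k : ℤ, ‖fc g k‖ ^ 2
      = ‖Complex.exp ((((k : ℝ) * h : ℝ) : ℂ) * Complex.I) - 1‖ ^ 2
        * ‖fc f k‖ ^ 2 := by
    intro k
    have h1 : fc g k = (Complex.exp ((((k : ℝ) * h : ℝ) : ℂ) * Complex.I) - 1) * fc f k := by
      have : fc g k = fc (fun θ => f (θ + h)) k - fc f k := aux_fc_sub hc' hc k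
      rw [this, aux_fc_shift hc hp h k]
      ring
    rw [h1, norm_mul, mul_pow]
  calc (2 - 2 * Real.cos (1/2)) * ∑ k ∈ s, ‖fc f k‖ ^ 2
      = ∑ k ∈ s, (2 - 2 * Real.cos (1/2)) * ‖fc f k‖ ^ 2 := Finset.mul_sum _ _ _
    _ ≤ ∑ k ∈ s, ‖fc g k‖ ^ 2 := by
        refine Finset.sum_le_sum fun k hk => ?_
        rw [hfc k, aux_abs_exp_sq ((k : ℝ) * h)]
        have habs : |(k : ℝ) * h| = |(k : ℝ)| * h := by rw [abs_mul, abs_of_pos hh]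
        have hcos : Real.cos ((k : ℝ) * h) ≤ Real.cos (1/2) := by
          rw [← Real.cos_abs ((k : ℝ) * h)]
          refine Real.cos_le_cos_of_nonneg_of_le_pi (by norm_num) ?_ ?_
          · rw [habs]; linarith [(hs k hk).2, Real.pi_gt_three]
          · rw [habs]; exact (hs k hk).1
        have := sq_nonneg (‖fc f k‖)
        nlinarith
    _ ≤ M ^ 2 := hb


theorem stmt5 {N : ℕ} (w : ℝ → ℝ) (hw : BariStechkin w)
    (hsum : Summable (fun k : ℕ => (w (1 / (k + 1 : ℝ))) ^ 2))
    (a : ℝ → Matrix (Fin N) (Fin N) ℂ)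
    (ha : ∀ α β, MemH w (fun θ => a θ α β)) :
    Summable (fun k : ℤ => (∑ α : Fin N, ∑ β : Fin N, ‖Fc a k α β‖ ^ 2) * |(k : ℝ)|) := by
  classical
  obtain ⟨⟨A, hA0, hAmono⟩, hpos, -, -, -, -, -⟩ := hw
  have hπ3 := Real.pi_gt_three
  have hcont : ∀ α β, Continuous (fun θ => a θ α β) := fun α β => (ha α β).1
  have hper : ∀ α β, Function.Periodic (fun θ => a θ α β) (2 * π) := fun α β => (ha α β).2.1
  choose Cf hCf using fun (α : Fin N) (β : Fin N) => (ha α β).2.2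
  choose Mf hMf0 hMf using fun (α : Fin N) (β : Fin N) => aux_bdd (hcont α β) (hper α β)
  set C : ℝ := ∑ p : Fin N × Fin N, max (Cf p.1 p.2) 0 with hCdef
  have hC0 : 0 ≤ C := Finset.sum_nonneg fun p _ => le_max_right _ _
  have hCle : ∀ α β, Cf α β ≤ C := by
    intro α β
    have h1 : max (Cf α β) 0 ≤ C :=
      Finset.single_le_sum (f := fun p : Fin N × Fin N => max (Cf p.1 p.2) 0)
        (fun p _ => le_max_right _ _) (Finset.mem_univ (α, β))
    exact le_trans (le_max_left _ _) h1
  have hmcle : ∀ α β x, 0 < x → x ≤ π → mc (fun θ => a θ α β) x ≤ C * w x := by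
    intro α β x hx hxπ
    exact le_trans (hCf α β x hx hxπ)
      (mul_le_mul_of_nonneg_right (hCle α β) (hpos x hx hxπ).le)
  set c : ℝ := 2 - 2 * Real.cos (1/2) with hcdef
  have hc0 : 0 < c := by
    have h1 : Real.cos (1/2) < Real.cos 0 :=
      Real.cos_lt_cos_of_nonneg_of_le_pi le_rfl (by linarith) (by norm_num)
    rw [Real.cos_zero] at h1
    simp only [hcdef]
    linarith
  set B : ℤ → ℝ := fun k => ∑ α : Fin N, ∑ β : Fin N,
    ‖fc (fun θ => a θ α β) k‖ ^ 2 with hBdef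
  have hBnn : ∀ k, 0 ≤ B k :=
    fun k => Finset.sum_nonneg fun _ _ => Finset.sum_nonneg fun _ _ => sq_nonneg _
  -- block estimate
  have block : ∀ ε : ℤ, (ε = 1 ∨ ε = -1) → ∀ m : ℕ, 1 ≤ m →
      c * ∑ k ∈ Finset.Ioc m (2*m), B (ε * (k:ℤ)) ≤ (N:ℝ)^2 * (C * w (1/(2*(m:ℝ))))^2 := by
    intro ε hε m hm
    have hm' : (0:ℝ) < m := by exact_mod_cast hm
    have h2m : (0:ℝ) < 2 * m := by positivity
    set h : ℝ := 1/(2*(m:ℝ)) with hhdef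
    have hh0 : 0 < h := by positivity
    have hhπ : h ≤ π := by
      have hm1 : (1:ℝ) ≤ m := by exact_mod_cast hm
      have : h ≤ 1/2 := by
        rw [hhdef]
        rw [div_le_div_iff₀ h2m (by norm_num)]
        linarith
      linarith
    have hεne : ε ≠ 0 := by rcases hε with rfl | rfl <;> norm_num
    have hinj : Function.Injective (fun k : ℕ => ε * (k:ℤ)) := by
      intro x y hxy
      simp only at hxy
      have := mul_left_cancel₀ hεne hxy
      exact_mod_cast this
    set s : Finset ℤ := (Finset.Ioc m (2*m)).map ⟨fun k : ℕ => ε * (k:ℤ), hinj⟩ with hsdef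
    have hrw : ∀ F : ℤ → ℝ, ∑ k ∈ s, F k = ∑ k ∈ Finset.Ioc m (2*m), F (ε * (k:ℤ)) :=
      fun F => Finset.sum_map _ _ _
    have hs : ∀ k ∈ s, 1/2 ≤ |(k : ℝ)| * h ∧ |(k : ℝ)| * h ≤ 1 := by
      intro k hk
      simp only [hsdef, Finset.mem_map, Function.Embedding.coeFn_mk] at hk
      obtain ⟨j, hj, rfl⟩ := hk
      rw [Finset.mem_Ioc] at hj
      have hj1 : (m:ℝ) + 1 ≤ (j:ℝ) := by exact_mod_cast hj.1
      have hj2 : (j:ℝ) ≤ 2*(m:ℝ) := by exact_mod_cast hj.2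
      have habs : |((ε * (j:ℤ) : ℤ) : ℝ)| = (j:ℝ) := by
        push_cast
        rw [abs_mul]
        rcases hε with rfl | rfl <;> simp
      rw [habs, hhdef, mul_one_div]
      constructor
      · rw [le_div_iff₀ h2m]; linarith
      · rw [div_le_one h2m]; linarith
    have key : ∀ α β, c * ∑ k ∈ Finset.Ioc m (2*m),
        ‖fc (fun θ => a θ α β) (ε * (k:ℤ))‖ ^ 2 ≤ (C * w h)^2 := by
      intro α β
      rw [← hrw (fun k => ‖fc (fun θ => a θ α β) k‖ ^ 2)]
      refine aux_block_scalar (hcont α β) (hper α β) hh0 (fun θ => ?_) s hs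
      exact le_trans (aux_le_mc (hMf α β) (by rw [abs_of_pos hh0]))
        (hmcle α β h hh0 hhπ)
    have step1 : c * ∑ k ∈ Finset.Ioc m (2*m), B (ε * (k:ℤ))
        = ∑ α : Fin N, ∑ β : Fin N, c * ∑ k ∈ Finset.Ioc m (2*m),
            ‖fc (fun θ => a θ α β) (ε * (k:ℤ))‖ ^ 2 := by
      simp only [hBdef, Finset.mul_sum]
      rw [Finset.sum_comm]
      refine Finset.sum_congr rfl fun α _ => ?_
      rw [Finset.sum_comm]
    rw [step1]
    calc ∑ α : Fin N, ∑ β : Fin N, c * ∑ k ∈ Finset.Ioc m (2*m),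
          ‖fc (fun θ => a θ α β) (ε * (k:ℤ))‖ ^ 2
        ≤ ∑ _α : Fin N, ∑ _β : Fin N, (C * w h)^2 :=
          Finset.sum_le_sum fun α _ => Finset.sum_le_sum fun β _ => key α β
      _ = (N:ℝ)^2 * (C * w h)^2 := by
          simp [Finset.sum_const, Finset.card_univ]
          ring
  -- weighted block estimate
  set K : ℝ := (2 * A^2 * (N:ℝ)^2 * C^2) / c with hKdef
  have hK0 : 0 ≤ K := by
    apply div_nonneg _ hc0.le
    positivity
  have blockW : ∀ ε : ℤ, (ε = 1 ∨ ε = -1) → ∀ m : ℕ, 1 ≤ m →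
      ∑ k ∈ Finset.Ioc m (2*m), B (ε * (k:ℤ)) * (k:ℝ)
        ≤ K * ∑ j ∈ Finset.Ioc m (2*m), (w (1/(j:ℝ)))^2 := by
    intro ε hε m hm
    have hm' : (0:ℝ) < m := by exact_mod_cast hm
    have h2m : (0:ℝ) < 2 * m := by positivity
    have hwm : 0 < w (1/(2*(m:ℝ))) := by
      apply hpos
      · positivity
      · have hm1 : (1:ℝ) ≤ m := by exact_mod_cast hm
        rw [div_le_iff₀ h2m]
        nlinarith
    have h1 : ∑ k ∈ Finset.Ioc m (2*m), B (ε * (k:ℤ)) * (k:ℝ)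
        ≤ (2*(m:ℝ)) * ∑ k ∈ Finset.Ioc m (2*m), B (ε * (k:ℤ)) := by
      rw [Finset.mul_sum]
      refine Finset.sum_le_sum fun k hk => ?_
      rw [Finset.mem_Ioc] at hk
      have hk2 : (k:ℝ) ≤ 2*(m:ℝ) := by exact_mod_cast hk.2
      rw [mul_comm (2*(m:ℝ)) _]
      exact mul_le_mul_of_nonneg_left hk2 (hBnn _)
    have h2 := block ε hε m hm
    have h3 : (m:ℝ) * (w (1/(2*(m:ℝ))))^2
        ≤ A^2 * ∑ j ∈ Finset.Ioc m (2*m), (w (1/(j:ℝ)))^2 := by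
      have hcard : (Finset.Ioc m (2*m)).card = m := by rw [Nat.card_Ioc]; omega
      have hlow : ∀ j ∈ Finset.Ioc m (2*m),
          (w (1/(2*(m:ℝ))))^2 / A^2 ≤ (w (1/(j:ℝ)))^2 := by
        intro j hj
        rw [Finset.mem_Ioc] at hj
        have hj0 : (0:ℝ) < j := by
          have : 0 < j := lt_of_le_of_lt (Nat.zero_le m) hj.1
          exact_mod_cast this
        have hj2 : (j:ℝ) ≤ 2*(m:ℝ) := by exact_mod_cast hj.2
        have hj1 : (1:ℝ) ≤ (j:ℝ) := by
          have : 1 ≤ j := le_trans hm (le_of_lt hj.1)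
          exact_mod_cast this
        have hmono := hAmono (1/(2*(m:ℝ))) (1/(j:ℝ)) (by positivity)
          (by apply div_le_div_of_nonneg_left (by norm_num) hj0 hj2)
          (by rw [div_le_iff₀ hj0]; nlinarith)
        have hwj : 0 < w (1/(j:ℝ)) := by
          apply hpos _ (by positivity)
          rw [div_le_iff₀ hj0]; nlinarith
        rw [div_le_iff₀ (by positivity : (0:ℝ) < A^2)]
        nlinarith
      have hns := Finset.card_nsmul_le_sum (Finset.Ioc m (2*m))
        (fun j => (w (1/(j:ℝ)))^2) ((w (1/(2*(m:ℝ))))^2 / A^2) hlow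
      rw [hcard, nsmul_eq_mul] at hns
      have hA2 : (0:ℝ) < A^2 := by positivity
      have hAne : A ≠ 0 := ne_of_gt hA0
      calc (m:ℝ) * (w (1/(2*(m:ℝ))))^2
          = A^2 * ((m:ℝ) * ((w (1/(2*(m:ℝ))))^2/A^2)) := by field_simp
        _ ≤ A^2 * ∑ j ∈ Finset.Ioc m (2*m), (w (1/(j:ℝ)))^2 := by
            refine mul_le_mul_of_nonneg_left ?_ hA2.le
            calc (m:ℝ) * ((w (1/(2*(m:ℝ))))^2/A^2)
                = (m:ℝ) * ((w (1/(2*(m:ℝ))))^2/A^2) := rfl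
              _ ≤ _ := hns
    have hSB : ∑ k ∈ Finset.Ioc m (2*m), B (ε * (k:ℤ))
        ≤ (N:ℝ)^2 * (C * w (1/(2*(m:ℝ))))^2 / c := by
      rw [le_div_iff₀ hc0]
      linarith
    have hfac : (0:ℝ) ≤ 2*(N:ℝ)^2*C^2/c := div_nonneg (by positivity) hc0.le
    calc ∑ k ∈ Finset.Ioc m (2*m), B (ε*(k:ℤ)) * (k:ℝ)
        ≤ (2*(m:ℝ)) * ∑ k ∈ Finset.Ioc m (2*m), B (ε*(k:ℤ)) := h1
      _ ≤ (2*(m:ℝ)) * ((N:ℝ)^2 * (C * w (1/(2*(m:ℝ))))^2 / c) :=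
          mul_le_mul_of_nonneg_left hSB (by positivity)
      _ = (2*(N:ℝ)^2*C^2/c) * ((m:ℝ) * (w (1/(2*(m:ℝ))))^2) := by
          field_simp
      _ ≤ (2*(N:ℝ)^2*C^2/c) * (A^2 * ∑ j ∈ Finset.Ioc m (2*m), (w (1/(j:ℝ)))^2) :=
          mul_le_mul_of_nonneg_left h3 hfac
      _ = K * ∑ j ∈ Finset.Ioc m (2*m), (w (1/(j:ℝ)))^2 := by
          rw [hKdef]
          field_simp
  -- tail sum bound
  set S : ℝ := ∑' k : ℕ, (w (1 / ((k:ℝ) + 1)))^2 with hSdef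
  have hS0 : 0 ≤ S := tsum_nonneg fun _ => sq_nonneg _
  have hψS : ∀ n : ℕ, ∑ j ∈ Finset.Ioc (1:ℕ) n, (w (1/(j:ℝ)))^2 ≤ S := by
    intro n
    have hsub : Finset.Ioc (1:ℕ) n ⊆ (Finset.range n).image (fun i : ℕ => i + 1) := by
      intro j hj
      rw [Finset.mem_Ioc] at hj
      rw [Finset.mem_image]
      exact ⟨j - 1, by rw [Finset.mem_range]; omega, by omega⟩
    calc ∑ j ∈ Finset.Ioc (1:ℕ) n, (w (1/(j:ℝ)))^2
        ≤ ∑ j ∈ (Finset.range n).image (fun i : ℕ => i + 1), (w (1/(j:ℝ)))^2 :=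
          Finset.sum_le_sum_of_subset_of_nonneg hsub (fun _ _ _ => sq_nonneg _)
      _ = ∑ i ∈ Finset.range n, (w (1/((i:ℝ) + 1)))^2 := by
          rw [Finset.sum_image (by intro x _ y _ hxy; simp only at hxy; omega)]
          refine Finset.sum_congr rfl fun i _ => ?_
          push_cast
          ring_nf
      _ ≤ S := Summable.sum_le_tsum (Finset.range n) (fun _ _ => sq_nonneg _) hsum
  -- dyadic induction
  have main : ∀ ε : ℤ, (ε = 1 ∨ ε = -1) → ∀ n : ℕ,
      ∑ k ∈ Finset.Ioc (1:ℕ) (2^n), B (ε * (k:ℤ)) * (k:ℝ)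
        ≤ K * ∑ j ∈ Finset.Ioc (1:ℕ) (2^n), (w (1/(j:ℝ)))^2 := by
    intro ε hε n
    induction n with
    | zero => simp
    | succ n ih =>
      have h1n : 1 ≤ 2^n := Nat.one_le_two_pow
      have h2n : 2^n ≤ 2^(n+1) := Nat.pow_le_pow_right (by norm_num) (Nat.le_succ n)
      have hItop : ∀ F : ℕ → ℝ, ∑ k ∈ Finset.Ioc (1:ℕ) (2^(n+1)), F k
          = ∑ k ∈ Finset.Ioc (1:ℕ) (2^n), F k + ∑ k ∈ Finset.Ioc (2^n) (2^(n+1)), F k :=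
        fun F => (Finset.sum_Ioc_consecutive F h1n h2n).symm
      have hIoc : Finset.Ioc ((2:ℕ)^n) (2^(n+1)) = Finset.Ioc (2^n) (2*2^n) := by
        congr 1
        rw [pow_succ]
        ring
      have hblk := blockW ε hε (2^n) h1n
      rw [← hIoc] at hblk
      rw [hItop (fun k => B (ε * (k:ℤ)) * (k:ℝ)), hItop (fun j => (w (1/(j:ℝ)))^2), mul_add]
      exact add_le_add ih hblk
  -- summability on each side
  have hu : ∀ ε : ℤ, (ε = 1 ∨ ε = -1) →
      Summable (fun k : ℕ => B (ε * (k:ℤ)) * (k:ℝ)) := by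
    intro ε hε
    apply summable_of_sum_range_le (c := B ε * 1 + K * S)
      (fun k => mul_nonneg (hBnn _) (Nat.cast_nonneg k))
    intro n
    have hpow : n < 2^n := Nat.lt_two_pow_self
    have hsub : Finset.range n ⊆ insert (0:ℕ) (insert (1:ℕ) (Finset.Ioc (1:ℕ) (2^n))) := by
      intro k hk
      rw [Finset.mem_range] at hk
      simp only [Finset.mem_insert, Finset.mem_Ioc]
      omega
    calc ∑ k ∈ Finset.range n, B (ε * (k:ℤ)) * (k:ℝ)
        ≤ ∑ k ∈ insert (0:ℕ) (insert (1:ℕ) (Finset.Ioc (1:ℕ) (2^n))), B (ε * (k:ℤ)) * (k:ℝ) :=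
          Finset.sum_le_sum_of_subset_of_nonneg hsub
            (fun k _ _ => mul_nonneg (hBnn _) (Nat.cast_nonneg k))
      _ = B (ε * ((0:ℕ):ℤ)) * ((0:ℕ):ℝ) + (B (ε * ((1:ℕ):ℤ)) * ((1:ℕ):ℝ)
            + ∑ k ∈ Finset.Ioc (1:ℕ) (2^n), B (ε * (k:ℤ)) * (k:ℝ)) := by
          rw [Finset.sum_insert (by simp), Finset.sum_insert (by simp)]
      _ ≤ B ε * 1 + K * S := by
          have hmain := main ε hε n
          have hψ := hψS (2^n)
          have h2 : K * ∑ j ∈ Finset.Ioc (1:ℕ) (2^n), (w (1/(j:ℝ)))^2 ≤ K * S :=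
            mul_le_mul_of_nonneg_left hψ hK0
          simp only [Nat.cast_zero, Nat.cast_one, mul_zero, mul_one, zero_add]
          linarith
  -- conclusion
  have hgoal : ∀ k : ℤ, (∑ α : Fin N, ∑ β : Fin N, ‖Fc a k α β‖ ^ 2) * |(k : ℝ)|
      = B k * |(k:ℝ)| := by
    intro k
    rfl
  refine Summable.of_nat_of_neg ?_ ?_
  · refine (hu 1 (Or.inl rfl)).congr fun k => ?_
    rw [hgoal]
    rw [one_mul]
    congr 1
    · push_cast
      rw [abs_of_nonneg (Nat.cast_nonneg k)]
  · refine (hu (-1) (Or.inr rfl)).congr fun k => ?_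
    rw [hgoal]
    congr 1
    · congr 1
      push_cast
      ring
    · push_cast
      rw [abs_neg, abs_of_nonneg (Nat.cast_nonneg k)]

end
end

section
/- Define inductively ℓ₁(x) := log x for x > x₁ := 1, and for k ≥ 2, ℓ_k(x) := log(ℓ_{k−1}(x)) for x > x_k, where x_k is determined by ℓ_{k−1}(x_k) = 1. Then for every m ∈ ℕ, every γ ∈ (0,1) and every finite sequence β₁,…,β_m ∈ ℝ, there exist positive constants b₁,…,b_m such that the function ω(x) := x^γ ∏_{k=1}^m [ℓ_k(b_k/x)]^{β_k} is well defined and positive for all 0 < x ≤ π (i.e., b_k/x > x_k for all such x) and belongs to the Bari–Stechkin class. -/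
open scoped Real
open Filter MeasureTheory

noncomputable section

/-- Iterated logarithms: `ell 0 = id`, `ell (k+1) = log ∘ ell k`, so `ell k = ℓ_k`. -/
def ell : ℕ → ℝ → ℝ
  | 0, x => x
  | k + 1, x => Real.log (ell k x)

/-- The thresholds `x_k`: `x_1 = 1` and `x_{k+1} = e^{x_k}`, so `ℓ_{k−1}(x_k) = 1`. -/
def xt : ℕ → ℝ
  | 0 => 0
  | 1 => 1
  | k + 2 => Real.exp (xt (k + 1))

namespace Stmt16Aux

def expIter : ℕ → ℝ → ℝ
  | 0, u => u
  | k + 1, u => Real.exp (expIter k u)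

theorem expIter_succ' (k : ℕ) (u : ℝ) : expIter (k + 1) u = expIter k (Real.exp u) := by
  induction k with
  | zero => rfl
  | succ k ih => show Real.exp (expIter (k+1) u) = _; rw [ih]; rfl

theorem expIter_mono (k : ℕ) {u v : ℝ} (h : u ≤ v) : expIter k u ≤ expIter k v := by
  induction k with
  | zero => exact h
  | succ k ih => exact Real.exp_le_exp.2 ih

theorem xt_eq (k : ℕ) : xt (k + 1) = expIter k 1 := by
  induction k with
  | zero => rfl
  | succ k ih => show Real.exp (xt (k+1)) = _; rw [ih]; rfl

theorem xt_mono : Monotone xt := by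
  apply monotone_nat_of_le_succ
  intro k
  cases k with
  | zero => show (0:ℝ) ≤ 1; norm_num
  | succ k =>
      rw [xt_eq, xt_eq, expIter_succ']
      exact expIter_mono k (by nlinarith [Real.add_one_le_exp (1:ℝ)])

theorem le_ell (k : ℕ) : ∀ u t : ℝ, 1 ≤ u → expIter k u ≤ t → u ≤ ell k t := by
  induction k with
  | zero => intro u t _ ht; exact ht
  | succ k ih =>
      intro u t hu ht
      rw [expIter_succ'] at ht
      have h2 : Real.exp u ≤ ell k t := ih (Real.exp u) t (Real.one_le_exp (by linarith)) ht
      have hpos : 0 < ell k t := lt_of_lt_of_le (Real.exp_pos u) h2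
      exact (Real.le_log_iff_exp_le hpos).2 h2

theorem one_le_ell (k : ℕ) (t : ℝ) (ht : xt (k + 1) ≤ t) : 1 ≤ ell k t :=
  le_ell k 1 t le_rfl (by rwa [← xt_eq])

theorem hasDerivAt_ell (k : ℕ) (t : ℝ) (h : ∀ j < k, 1 ≤ ell j t) :
    HasDerivAt (ell k) (∏ j ∈ Finset.range k, ell j t)⁻¹ t := by
  induction k with
  | zero => show HasDerivAt (fun x => x) _ t; simpa using (hasDerivAt_id' t)
  | succ k ih =>
      have hd := ih (fun j hj => h j (hj.trans (Nat.lt_succ_self k)))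
      have hne : ell k t ≠ 0 := by
        have := h k (Nat.lt_succ_self k); linarith
      have hlog := hd.log hne
      have heq : (∏ j ∈ Finset.range k, ell j t)⁻¹ / ell k t
          = (∏ j ∈ Finset.range (k + 1), ell j t)⁻¹ := by
        rw [Finset.prod_range_succ, mul_inv, div_eq_mul_inv]
      rw [heq] at hlog
      exact hlog

theorem ell_measurable (k : ℕ) : Measurable (ell k) := by
  induction k with
  | zero => exact measurable_id
  | succ k ih => exact Real.measurable_log.comp ih


set_option maxHeartbeats 1000000 in
theorem measurable_rpow_const (c : ℝ) : Measurable fun x : ℝ => x ^ c := by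
  measurability

end Stmt16Aux

set_option maxHeartbeats 1000000 in
/-- For every `m`, `γ ∈ (0,1)` and reals `β₁,…,β_m` there are positive
constants `b₁,…,b_m` such that `ω(x) = x^γ ∏_k ℓ_k(b_k/x)^{β_k}` is well defined and
positive on `(0,π]` and belongs to the Bari–Stechkin class. -/
theorem stmt16 (m : ℕ) (γ : ℝ) (hγ : 0 < γ ∧ γ < 1) (β : ℕ → ℝ) :
    ∃ b : ℕ → ℝ, (∀ k ∈ Finset.Icc 1 m, 0 < b k) ∧
      (∀ x : ℝ, 0 < x → x ≤ π → ∀ k ∈ Finset.Icc 1 m,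
        xt k < b k / x ∧ 0 < ell k (b k / x)) ∧
      BariStechkin (fun x => x ^ γ * ∏ k ∈ Finset.Icc 1 m, ell k (b k / x) ^ β k) := by
  obtain ⟨hγ0, hγ1⟩ := hγ
  have hπ := Real.pi_pos
  set S := ∑ k ∈ Finset.Icc 1 m, |β k| with hSdef
  have hS0 : 0 ≤ S := Finset.sum_nonneg fun k _ => abs_nonneg _
  set ε := min γ (1 - γ) / 2 with hεdef
  have hε0 : 0 < ε := by
    have : 0 < min γ (1 - γ) := lt_min hγ0 (by linarith)
    rw [hεdef]; linarith
  have hεγ : ε ≤ γ / 2 := by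
    have := min_le_left γ (1 - γ); rw [hεdef]; linarith
  have hεγ' : ε ≤ (1 - γ) / 2 := by
    have := min_le_right γ (1 - γ); rw [hεdef]; linarith
  set R := max (xt (m + 2)) (S / ε + 1) with hRdef
  have hR1 : 1 ≤ R := le_trans (le_add_of_nonneg_left (div_nonneg hS0 hε0.le)) (le_max_right _ _)
  have hR0 : 0 < R := lt_of_lt_of_le one_pos hR1
  have hRS : S ≤ ε * R := by
    have h1 : S / ε ≤ R := le_trans (by linarith) (le_max_right _ _)
    calc S = ε * (S / ε) := by field_simp
    _ ≤ ε * R := by nlinarith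
  have hRxt : xt (m + 2) ≤ R := le_max_left _ _
  set b := π * Real.exp R with hbdef
  have hb0 : 0 < b := by positivity
  -- basic facts about t = b / x
  have hexpR : ∀ x : ℝ, 0 < x → x ≤ π → Real.exp R ≤ b / x := by
    intro x hx hxπ
    rw [le_div_iff₀ hx, hbdef]
    nlinarith [Real.exp_pos R]
  have ht0 : ∀ x : ℝ, 0 < x → x ≤ π → 0 < b / x := fun x hx _ => div_pos hb0 hx
  have hRt : ∀ x : ℝ, 0 < x → x ≤ π → R < b / x := fun x hx hxπ =>
    lt_of_lt_of_le (by nlinarith [Real.add_one_le_exp R]) (hexpR x hx hxπ)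
  have hlogt : ∀ x : ℝ, 0 < x → x ≤ π → R ≤ Real.log (b / x) := fun x hx hxπ =>
    (Real.le_log_iff_exp_le (ht0 x hx hxπ)).2 (hexpR x hx hxπ)
  have hone : ∀ x : ℝ, 0 < x → x ≤ π → ∀ k, k ≤ m + 1 → 1 ≤ ell k (b / x) := by
    intro x hx hxπ k hk
    apply Stmt16Aux.one_le_ell
    calc xt (k + 1) ≤ xt (m + 2) := Stmt16Aux.xt_mono (by omega)
    _ ≤ R := hRxt
    _ ≤ b / x := (hRt x hx hxπ).le
  -- product lower bound
  have hprod : ∀ x : ℝ, 0 < x → x ≤ π → ∀ n : ℕ, n + 1 ≤ m →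
      b / x * R ≤ ∏ j ∈ Finset.range (n + 2), ell j (b / x) := by
    intro x hx hxπ n
    induction n with
    | zero =>
        intro _
        have h2 : ∏ j ∈ Finset.range 2, ell j (b / x) = b / x * Real.log (b / x) := by
          rw [Finset.prod_range_succ, Finset.prod_range_one]; rfl
        rw [h2]
        have h3 := hlogt x hx hxπ
        have h4 := ht0 x hx hxπ
        nlinarith
    | succ n ih =>
        intro hn
        have h1 := ih (by omega)
        rw [Finset.prod_range_succ]
        have h2 : 1 ≤ ell (n + 2) (b / x) := hone x hx hxπ (n + 2) (by omega)
        have h3 : 0 < b / x * R := mul_pos (ht0 x hx hxπ) hR0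
        nlinarith
  -- derivative of the log of the weight (shifted by c)
  have hD : ∀ c : ℝ, ∀ x : ℝ, 0 < x → x ≤ π →
      HasDerivAt (fun x : ℝ => Real.log x * (γ - c) + ∑ k ∈ Finset.Icc 1 m, ell (k + 1) (b / x) * β k)
        (x⁻¹ * (γ - c) + ∑ k ∈ Finset.Icc 1 m,
          (∏ j ∈ Finset.range (k + 1), ell j (b / x))⁻¹ * (b * -(x ^ 2)⁻¹) * β k) x := by
    intro c x hx hxπ
    have hx' : x ≠ 0 := ne_of_gt hx
    have hlogd : HasDerivAt (fun x : ℝ => Real.log x * (γ - c)) (x⁻¹ * (γ - c)) x :=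
      (Real.hasDerivAt_log hx').mul_const _
    refine hlogd.add (HasDerivAt.fun_sum ?_)
    intro k hk
    simp only [Finset.mem_Icc] at hk
    have hinner : HasDerivAt (fun x : ℝ => b * x⁻¹) (b * -(x ^ 2)⁻¹) x :=
      (hasDerivAt_inv hx').const_mul b
    have houter : HasDerivAt (ell (k + 1)) (∏ j ∈ Finset.range (k + 1), ell j (b * x⁻¹))⁻¹ (b * x⁻¹) := by
      apply Stmt16Aux.hasDerivAt_ell
      intro j hj
      rw [show b * x⁻¹ = b / x from (div_eq_mul_inv b x).symm]
      exact hone x hx hxπ j (by omega)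
    have hcomp := (houter.comp x hinner).mul_const (β k)
    simpa [Function.comp, div_eq_mul_inv] using hcomp
  -- bound on the error term in the derivative
  have hEbound : ∀ x : ℝ, 0 < x → x ≤ π →
      |∑ k ∈ Finset.Icc 1 m,
        (∏ j ∈ Finset.range (k + 1), ell j (b / x))⁻¹ * (b * -(x ^ 2)⁻¹) * β k| ≤ ε / x := by
    intro x hx hxπ
    have ht := ht0 x hx hxπ
    calc |∑ k ∈ Finset.Icc 1 m,
        (∏ j ∈ Finset.range (k + 1), ell j (b / x))⁻¹ * (b * -(x ^ 2)⁻¹) * β k|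
        ≤ ∑ k ∈ Finset.Icc 1 m,
          |(∏ j ∈ Finset.range (k + 1), ell j (b / x))⁻¹ * (b * -(x ^ 2)⁻¹) * β k| :=
          Finset.abs_sum_le_sum_abs _ _
    _ ≤ ∑ k ∈ Finset.Icc 1 m, |β k| * (x * R)⁻¹ := by
        apply Finset.sum_le_sum
        intro k hk
        simp only [Finset.mem_Icc] at hk
        obtain ⟨n, rfl⟩ : ∃ n, k = n + 1 := ⟨k - 1, by omega⟩
        have hp := hprod x hx hxπ n (by omega)
        have hppos : 0 < ∏ j ∈ Finset.range (n + 2), ell j (b / x) :=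
          lt_of_lt_of_le (mul_pos ht hR0) hp
        rw [abs_mul, abs_mul]
        have h1 : |(∏ j ∈ Finset.range (n + 1 + 1), ell j (b / x))⁻¹|
            = (∏ j ∈ Finset.range (n + 2), ell j (b / x))⁻¹ :=
          abs_of_pos (inv_pos.2 hppos)
        have h2 : |b * -(x ^ 2)⁻¹| = b * (x ^ 2)⁻¹ := by
          rw [abs_mul, abs_neg, abs_inv, abs_of_pos hb0, abs_of_pos (pow_pos hx 2)]
        rw [h1, h2]
        have key : (∏ j ∈ Finset.range (n + 2), ell j (b / x))⁻¹ * (b * (x ^ 2)⁻¹) ≤ (x * R)⁻¹ := by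
          have hi : (∏ j ∈ Finset.range (n + 2), ell j (b / x))⁻¹ ≤ (b / x * R)⁻¹ :=
            inv_anti₀ (mul_pos ht hR0) hp
          calc (∏ j ∈ Finset.range (n + 2), ell j (b / x))⁻¹ * (b * (x ^ 2)⁻¹)
              ≤ (b / x * R)⁻¹ * (b * (x ^ 2)⁻¹) :=
                mul_le_mul_of_nonneg_right hi (by positivity)
          _ = (x * R)⁻¹ := by field_simp
        calc (∏ j ∈ Finset.range (n + 2), ell j (b / x))⁻¹ * (b * (x ^ 2)⁻¹) * |β (n + 1)|
            ≤ (x * R)⁻¹ * |β (n + 1)| := mul_le_mul_of_nonneg_right key (abs_nonneg _)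
        _ = |β (n + 1)| * (x * R)⁻¹ := mul_comm _ _
    _ = S * (x * R)⁻¹ := by rw [← Finset.sum_mul]
    _ ≤ ε / x := by
        have hxi : (0:ℝ) ≤ x⁻¹ := by positivity
        have hRinv : S * R⁻¹ ≤ ε := by
          have := mul_le_mul_of_nonneg_right hRS (inv_nonneg.2 hR0.le)
          rwa [mul_assoc, mul_inv_cancel₀ hR0.ne', mul_one] at this
        calc S * (x * R)⁻¹ = S * R⁻¹ * x⁻¹ := by rw [mul_inv]; ring
        _ ≤ ε * x⁻¹ := mul_le_mul_of_nonneg_right hRinv hxi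
        _ = ε / x := (div_eq_mul_inv ε x).symm
  -- monotonicity of the shifted log-weight
  have hmono : ∀ c : ℝ, ε ≤ γ - c →
      MonotoneOn (fun x : ℝ => Real.log x * (γ - c) + ∑ k ∈ Finset.Icc 1 m, ell (k + 1) (b / x) * β k)
        (Set.Ioc 0 π) := by
    intro c hc
    apply monotoneOn_of_deriv_nonneg (convex_Ioc 0 π)
    · intro x hx
      exact (hD c x hx.1 hx.2).continuousAt.continuousWithinAt
    · intro x hx
      rw [interior_Ioc] at hx
      exact (hD c x hx.1 hx.2.le).differentiableAt.differentiableWithinAt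
    · intro x hx
      rw [interior_Ioc] at hx
      obtain ⟨hx1, hx2⟩ := hx
      rw [(hD c x hx1 hx2.le).deriv]
      have hE := abs_le.1 (hEbound x hx1 hx2.le)
      have h1 : ε / x ≤ x⁻¹ * (γ - c) := by
        rw [div_eq_inv_mul]
        exact mul_le_mul_of_nonneg_left hc (by positivity)
      linarith [hE.1]
  have hanti : ∀ c : ℝ, γ - c ≤ -ε →
      AntitoneOn (fun x : ℝ => Real.log x * (γ - c) + ∑ k ∈ Finset.Icc 1 m, ell (k + 1) (b / x) * β k)
        (Set.Ioc 0 π) := by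
    intro c hc
    apply antitoneOn_of_deriv_nonpos (convex_Ioc 0 π)
    · intro x hx
      exact (hD c x hx.1 hx.2).continuousAt.continuousWithinAt
    · intro x hx
      rw [interior_Ioc] at hx
      exact (hD c x hx.1 hx.2.le).differentiableAt.differentiableWithinAt
    · intro x hx
      rw [interior_Ioc] at hx
      obtain ⟨hx1, hx2⟩ := hx
      rw [(hD c x hx1 hx2.le).deriv]
      have hE := abs_le.1 (hEbound x hx1 hx2.le)
      have h1 : x⁻¹ * (γ - c) ≤ -(ε / x) := by
        rw [div_eq_inv_mul]
        have := mul_le_mul_of_nonneg_left hc (by positivity : (0:ℝ) ≤ x⁻¹)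
        linarith
      linarith [hE.2]
  -- weight = exp of log-weight
  have hw : ∀ c : ℝ, ∀ x : ℝ, 0 < x → x ≤ π →
      x ^ γ * ∏ k ∈ Finset.Icc 1 m, ell k (b / x) ^ β k
        = Real.exp (Real.log x * (γ - c) + ∑ k ∈ Finset.Icc 1 m, ell (k + 1) (b / x) * β k)
          * x ^ c := by
    intro c x hx hxπ
    have hp : ∀ k ∈ Finset.Icc 1 m, ell k (b / x) ^ β k = Real.exp (ell (k + 1) (b / x) * β k) := by
      intro k hk
      simp only [Finset.mem_Icc] at hk
      have h1 : 0 < ell k (b / x) := lt_of_lt_of_le one_pos (hone x hx hxπ k (by omega))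
      rw [Real.rpow_def_of_pos h1]
      rfl
    rw [Finset.prod_congr rfl hp, ← Real.exp_sum, Real.rpow_def_of_pos hx γ,
      Real.rpow_def_of_pos hx c, ← Real.exp_add, ← Real.exp_add]
    congr 1
    ring
  -- positivity of the weight
  have hwpos : ∀ x : ℝ, 0 < x → x ≤ π →
      0 < x ^ γ * ∏ k ∈ Finset.Icc 1 m, ell k (b / x) ^ β k := by
    intro x hx hxπ
    rw [hw 0 x hx hxπ]
    positivity
  -- measurability
  have hγne : γ ≠ 0 := ne_of_gt hγ0
  have hmb : Measurable fun y : ℝ => b / y := measurable_const.div measurable_id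
  have hmw : Measurable (fun y : ℝ => y ^ γ * ∏ k ∈ Finset.Icc 1 m, ell k (b / y) ^ β k) := by
    apply Measurable.mul
    · exact (Stmt16Aux.measurable_rpow_const γ).comp measurable_id
    · apply Finset.measurable_prod
      intro k _
      exact (Stmt16Aux.measurable_rpow_const (β k)).comp ((Stmt16Aux.ell_measurable k).comp hmb)
  -- pointwise formulas
  have hwdiv : ∀ y : ℝ, 0 < y → y ≤ π →
      (y ^ γ * ∏ k ∈ Finset.Icc 1 m, ell k (b / y) ^ β k) / y
        = Real.exp (Real.log y * (γ - γ/2) + ∑ k ∈ Finset.Icc 1 m, ell (k + 1) (b / y) * β k)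
          * y ^ (γ/2 - 1) := by
    intro y hy hyπ
    rw [hw (γ/2) y hy hyπ, mul_div_assoc, ← Real.rpow_sub_one (ne_of_gt hy)]
  have hwdiv2 : ∀ y : ℝ, 0 < y → y ≤ π →
      (y ^ γ * ∏ k ∈ Finset.Icc 1 m, ell k (b / y) ^ β k) / y ^ 2
        = Real.exp (Real.log y * (γ - (1+γ)/2) + ∑ k ∈ Finset.Icc 1 m, ell (k + 1) (b / y) * β k)
          * y ^ ((1+γ)/2 - 2) := by
    intro y hy hyπ
    rw [hw ((1+γ)/2) y hy hyπ, mul_div_assoc]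
    congr 1
    rw [← Real.rpow_natCast y 2, ← Real.rpow_sub hy]
    norm_num
  -- integrability near 0
  have hint1 : ∀ x : ℝ, 0 < x → x ≤ π →
      IntervalIntegrable
        (fun y => (y ^ γ * ∏ k ∈ Finset.Icc 1 m, ell k (b / y) ^ β k) / y) volume 0 x := by
    intro x hx hxπ
    rw [intervalIntegrable_iff, Set.uIoc_of_le hx.le]
    apply MeasureTheory.Integrable.mono'
      (g := fun y => Real.exp (Real.log π * (γ - γ/2)
        + ∑ k ∈ Finset.Icc 1 m, ell (k + 1) (b / π) * β k) * y ^ (γ/2 - 1))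
    · have h := (intervalIntegral.intervalIntegrable_rpow' (a := 0) (b := x)
        (by linarith : (-1:ℝ) < γ/2 - 1)).const_mul
        (Real.exp (Real.log π * (γ - γ/2) + ∑ k ∈ Finset.Icc 1 m, ell (k + 1) (b / π) * β k))
      rwa [intervalIntegrable_iff, Set.uIoc_of_le hx.le] at h
    · exact (hmw.div measurable_id).aestronglyMeasurable.restrict
    · rw [MeasureTheory.ae_restrict_iff' measurableSet_Ioc]
      apply MeasureTheory.ae_of_all
      intro y hy
      have hy1 : 0 < y := hy.1
      have hy2 : y ≤ π := hy.2.trans hxπ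
      have hq : 0 < (y ^ γ * ∏ k ∈ Finset.Icc 1 m, ell k (b / y) ^ β k) / y :=
        div_pos (hwpos y hy1 hy2) hy1
      rw [Real.norm_eq_abs, abs_of_pos hq, hwdiv y hy1 hy2]
      apply mul_le_mul_of_nonneg_right _ (Real.rpow_nonneg hy1.le _)
      exact Real.exp_le_exp.2 (hmono (γ/2) (by linarith) ⟨hy1, hy2⟩ ⟨hπ, le_rfl⟩ hy2)
  -- integrability away from 0
  have hint2 : ∀ x : ℝ, 0 < x → x ≤ π →
      IntervalIntegrable
        (fun y => (y ^ γ * ∏ k ∈ Finset.Icc 1 m, ell k (b / y) ^ β k) / y ^ 2) volume x π := by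
    intro x hx hxπ
    have h0m : (0:ℝ) ∉ Set.uIcc x π := by
      rw [Set.uIcc_of_le hxπ]
      intro h
      exact absurd h.1 (not_le.2 hx)
    rw [intervalIntegrable_iff, Set.uIoc_of_le hxπ]
    apply MeasureTheory.Integrable.mono'
      (g := fun y => Real.exp (Real.log x * (γ - (1+γ)/2)
        + ∑ k ∈ Finset.Icc 1 m, ell (k + 1) (b / x) * β k) * y ^ ((1+γ)/2 - 2))
    · have h := (intervalIntegral.intervalIntegrable_rpow (a := x) (b := π)
        (r := (1+γ)/2 - 2) (μ := volume) (Or.inr h0m)).const_mul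
        (Real.exp (Real.log x * (γ - (1+γ)/2) + ∑ k ∈ Finset.Icc 1 m, ell (k + 1) (b / x) * β k))
      rwa [intervalIntegrable_iff, Set.uIoc_of_le hxπ] at h
    · exact (hmw.div (measurable_id.pow_const 2)).aestronglyMeasurable.restrict
    · rw [MeasureTheory.ae_restrict_iff' measurableSet_Ioc]
      apply MeasureTheory.ae_of_all
      intro y hy
      have hy1 : 0 < y := hx.trans hy.1
      have hq : 0 < (y ^ γ * ∏ k ∈ Finset.Icc 1 m, ell k (b / y) ^ β k) / y ^ 2 :=
        div_pos (hwpos y hy1 hy.2) (by positivity)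
      rw [Real.norm_eq_abs, abs_of_pos hq, hwdiv2 y hy1 hy.2]
      apply mul_le_mul_of_nonneg_right _ (Real.rpow_nonneg hy1.le _)
      exact Real.exp_le_exp.2 (hanti ((1+γ)/2) (by linarith) ⟨hx, hxπ⟩ ⟨hy1, hy.2⟩ hy.1.le)
  -- assemble
  refine ⟨fun _ => b, fun k _ => hb0, ?_, ?_⟩
  · intro x hx hxπ k hk
    simp only [Finset.mem_Icc] at hk
    refine ⟨?_, lt_of_lt_of_le one_pos (hone x hx hxπ k (by omega))⟩
    calc xt k ≤ xt (m + 2) := Stmt16Aux.xt_mono (by omega)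
    _ ≤ R := hRxt
    _ < b / x := hRt x hx hxπ
  show BariStechkin fun x => x ^ γ * ∏ k ∈ Finset.Icc 1 m, ell k (b / x) ^ β k
  refine ⟨⟨1, one_pos, ?_⟩, hwpos, ?_, hint1, ⟨2/γ, ?_⟩, hint2, ⟨2/(1-γ), ?_⟩⟩
  -- almost increasing
  · intro x y hx hxy hyπ
    beta_reduce
    rw [one_mul, hw 0 x hx (hxy.trans hyπ), hw 0 y (hx.trans_le hxy) hyπ,
      Real.rpow_zero, Real.rpow_zero, mul_one, mul_one]
    exact Real.exp_le_exp.2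
      (hmono 0 (by linarith) ⟨hx, hxy.trans hyπ⟩ ⟨hx.trans_le hxy, hyπ⟩ hxy)
  -- tendsto 0
  · have hev : ∀ᶠ x : ℝ in nhdsWithin 0 (Set.Ioi 0), 0 < x ∧ x ≤ π := by
      have h1 : ∀ᶠ x : ℝ in nhdsWithin 0 (Set.Ioi 0), x < π :=
        (eventually_lt_nhds hπ).filter_mono nhdsWithin_le_nhds
      have h2 : ∀ᶠ x : ℝ in nhdsWithin 0 (Set.Ioi 0), x ∈ Set.Ioi 0 :=
        eventually_mem_nhdsWithin
      filter_upwards [h1, h2] with x hx1 hx2 using ⟨hx2, hx1.le⟩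
    apply squeeze_zero' (g := fun x => Real.exp (Real.log π * (γ - γ/2)
      + ∑ k ∈ Finset.Icc 1 m, ell (k + 1) (b / π) * β k) * x ^ (γ/2))
    · filter_upwards [hev] with x hx
      exact (hwpos x hx.1 hx.2).le
    · filter_upwards [hev] with x hx
      rw [hw (γ/2) x hx.1 hx.2]
      exact mul_le_mul_of_nonneg_right
        (Real.exp_le_exp.2 (hmono (γ/2) (by linarith) ⟨hx.1, hx.2⟩ ⟨hπ, le_rfl⟩ hx.2))
        (Real.rpow_nonneg hx.1.le _)
    · have h0 : Filter.Tendsto (fun x : ℝ => x ^ (γ/2)) (nhds 0) (nhds 0) := by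
        have h := (Real.continuousAt_rpow_const 0 (γ/2) (Or.inr (by linarith))).tendsto
        rwa [Real.zero_rpow (by linarith : γ/2 ≠ 0)] at h
      have h2 : Filter.Tendsto (fun x : ℝ => Real.exp (Real.log π * (γ - γ/2)
          + ∑ k ∈ Finset.Icc 1 m, ell (k + 1) (b / π) * β k) * x ^ (γ/2))
          (nhdsWithin 0 (Set.Ioi 0)) (nhds (Real.exp (Real.log π * (γ - γ/2)
          + ∑ k ∈ Finset.Icc 1 m, ell (k + 1) (b / π) * β k) * 0)) :=
        (h0.const_mul _).mono_left nhdsWithin_le_nhds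
      simpa using h2
  -- first integral bound
  · intro x hx hxπ
    beta_reduce
    have hrint : IntervalIntegrable
        (fun y : ℝ => Real.exp (Real.log x * (γ - γ/2)
          + ∑ k ∈ Finset.Icc 1 m, ell (k + 1) (b / x) * β k) * y ^ (γ/2 - 1)) volume 0 x :=
      (intervalIntegral.intervalIntegrable_rpow' (by linarith)).const_mul _
    calc (∫ y in (0:ℝ)..x, (y ^ γ * ∏ k ∈ Finset.Icc 1 m, ell k (b / y) ^ β k) / y)
        ≤ ∫ y in (0:ℝ)..x,
            Real.exp (Real.log x * (γ - γ/2)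
              + ∑ k ∈ Finset.Icc 1 m, ell (k + 1) (b / x) * β k) * y ^ (γ/2 - 1) := by
          apply intervalIntegral.integral_mono_on hx.le (hint1 x hx hxπ) hrint
          intro y hy
          rcases eq_or_lt_of_le hy.1 with h0 | h0
          · rw [← h0, div_zero, Real.zero_rpow (by linarith : γ/2 - 1 ≠ 0), mul_zero]
          · rw [hwdiv y h0 (hy.2.trans hxπ)]
            apply mul_le_mul_of_nonneg_right _ (Real.rpow_nonneg h0.le _)
            exact Real.exp_le_exp.2
              (hmono (γ/2) (by linarith) ⟨h0, hy.2.trans hxπ⟩ ⟨hx, hxπ⟩ hy.2)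
    _ = Real.exp (Real.log x * (γ - γ/2) + ∑ k ∈ Finset.Icc 1 m, ell (k + 1) (b / x) * β k)
          * ((x ^ (γ/2 - 1 + 1) - (0:ℝ) ^ (γ/2 - 1 + 1)) / (γ/2 - 1 + 1)) := by
          rw [intervalIntegral.integral_const_mul, integral_rpow (Or.inl (by linarith))]
    _ ≤ 2/γ * (x ^ γ * ∏ k ∈ Finset.Icc 1 m, ell k (b / x) ^ β k) := by
          rw [hw (γ/2) x hx hxπ,
            show γ/2 - 1 + 1 = γ/2 by ring, Real.zero_rpow (by linarith : γ/2 ≠ 0), sub_zero]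
          apply le_of_eq
          field_simp
  -- second integral bound
  · intro x hx hxπ
    beta_reduce
    have h2 : (0:ℝ) < 1 - γ := by linarith
    have h0m : (0:ℝ) ∉ Set.uIcc x π := by
      rw [Set.uIcc_of_le hxπ]
      intro h
      exact absurd h.1 (not_le.2 hx)
    set E := Real.exp (Real.log x * (γ - (1+γ)/2)
      + ∑ k ∈ Finset.Icc 1 m, ell (k + 1) (b / x) * β k) with hEdef
    have hEp : (0:ℝ) < E := Real.exp_pos _
    have hrint : IntervalIntegrable (fun y : ℝ => E * y ^ ((1+γ)/2 - 2)) volume x π :=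
      (intervalIntegral.intervalIntegrable_rpow (μ := volume) (Or.inr h0m)).const_mul _
    have hstep : (∫ y in x..π, (y ^ γ * ∏ k ∈ Finset.Icc 1 m, ell k (b / y) ^ β k) / y ^ 2)
        ≤ ∫ y in x..π, E * y ^ ((1+γ)/2 - 2) := by
      apply intervalIntegral.integral_mono_on hxπ (hint2 x hx hxπ) hrint
      intro y hy
      have hy1 : 0 < y := lt_of_lt_of_le hx hy.1
      rw [hwdiv2 y hy1 hy.2, hEdef]
      apply mul_le_mul_of_nonneg_right _ (Real.rpow_nonneg hy1.le _)
      exact Real.exp_le_exp.2 (hanti ((1+γ)/2) (by linarith) ⟨hx, hxπ⟩ ⟨hy1, hy.2⟩ hy.1)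
    have hval : (∫ y in x..π, E * y ^ ((1+γ)/2 - 2))
        = E * ((π ^ ((1+γ)/2 - 2 + 1) - x ^ ((1+γ)/2 - 2 + 1)) / ((1+γ)/2 - 2 + 1)) := by
      rw [intervalIntegral.integral_const_mul,
        integral_rpow (Or.inr ⟨ne_of_lt (by linarith), h0m⟩)]
    have hcne : (1+γ)/2 - 2 + 1 ≠ 0 := ne_of_lt (by linarith)
    have hπr : (0:ℝ) ≤ π ^ ((1+γ)/2 - 2 + 1) := Real.rpow_nonneg hπ.le _
    have hxr : x ^ ((1+γ)/2 - 2 + 1) = x ^ ((1+γ)/2) / x := by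
      rw [show (1+γ)/2 - 2 + 1 = (1+γ)/2 - 1 by ring]
      exact Real.rpow_sub_one hx.ne' _
    have keygen : ∀ P Q : ℝ, x * (E * ((P - Q / x) / ((1+γ)/2 - 2 + 1)))
        = 2/(1-γ) * (E * Q) - 2/(1-γ) * E * x * P := by
      intro P Q
      rw [show x * (E * ((P - Q / x) / ((1+γ)/2 - 2 + 1)))
          = (x * E * (P - Q / x)) / ((1+γ)/2 - 2 + 1) from by ring]
      rw [div_eq_iff hcne]
      field_simp
      ring
    have key : x * (E * ((π ^ ((1+γ)/2 - 2 + 1) - x ^ ((1+γ)/2 - 2 + 1)) / ((1+γ)/2 - 2 + 1)))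
        = 2/(1-γ) * (E * x ^ ((1+γ)/2)) - 2/(1-γ) * E * x * π ^ ((1+γ)/2 - 2 + 1) := by
      rw [hxr]
      exact keygen _ _
    calc x * (∫ y in x..π, (y ^ γ * ∏ k ∈ Finset.Icc 1 m, ell k (b / y) ^ β k) / y ^ 2)
        ≤ x * (E * ((π ^ ((1+γ)/2 - 2 + 1) - x ^ ((1+γ)/2 - 2 + 1)) / ((1+γ)/2 - 2 + 1))) := by
          apply mul_le_mul_of_nonneg_left _ hx.le
          rw [← hval]
          exact hstep
    _ ≤ 2/(1-γ) * (E * x ^ ((1+γ)/2)) := by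
          rw [key]
          have h4 : (0:ℝ) ≤ 2/(1-γ) := le_of_lt (div_pos two_pos h2)
          have h5 : (0:ℝ) ≤ 2/(1-γ) * E * x * π ^ ((1+γ)/2 - 2 + 1) :=
            mul_nonneg (mul_nonneg (mul_nonneg h4 hEp.le) hx.le) hπr
          linarith
    _ = 2/(1-γ) * (x ^ γ * ∏ k ∈ Finset.Icc 1 m, ell k (b / x) ^ β k) := by
          rw [hw ((1+γ)/2) x hx hxπ, ← hEdef]


end
end
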